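/- Asymptotic tightness is the best possible (binomial instance, Extended Results EC.6): let K be an integer with K ≥ 72π and let B₁,…,B_K be i.i.d. random variables with P(B_k = 1) = P(B_k = 0) = 1/2. Then E[ min( Σ_{k=1}^K B_k , K/2 ) ] ≤ (K/2)·(1 − 1/√(26K)). -/

import Mathlib

open MeasureTheory Finset

/-- auxiliary: squared central binomial lower bound `16^n ≤ 4n (C(2n,n))²`. -/
lemma aux_cb_sq (n : ℕ) (hn : 1 ≤ n) : 16 ^ n ≤ 4 * n * (Nat.centralBinom n)^2 := by
  induction n with
  | zero => omega
  | succ m ih =>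
    rcases Nat.eq_or_lt_of_le hn with h | h
    · rw [← h]; decide
    · have hm : 1 ≤ m := by omega
      have h1 := ih hm
      have key : (m + 1) * Nat.centralBinom (m + 1) = 2 * (2 * m + 1) * Nat.centralBinom m :=
        Nat.succ_mul_centralBinom_succ m
      have h2 : (m+1) * (16 ^ (m+1)) ≤ (m+1) * (4 * (m+1) * (Nat.centralBinom (m+1))^2) := by
        have e1 : (m+1) * (4 * (m+1) * (Nat.centralBinom (m+1))^2)
            = 4 * ((m+1) * Nat.centralBinom (m+1))^2 := by ring
        rw [e1, key]
        have e2 : 4 * (2 * (2 * m + 1) * Nat.centralBinom m) ^ 2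
            = (2*m+1)^2 * (16 * (Nat.centralBinom m)^2) := by ring
        rw [e2]
        calc (m+1) * 16^(m+1) = (m+1) * 16 * 16^m := by ring
          _ ≤ (m+1) * 16 * (4 * m * (Nat.centralBinom m)^2) := Nat.mul_le_mul_left _ h1
          _ = (4*m*(m+1)) * (16 * (Nat.centralBinom m)^2) := by ring
          _ ≤ (2*m+1)^2 * (16 * (Nat.centralBinom m)^2) := by
              apply Nat.mul_le_mul_right; nlinarith
      exact Nat.le_of_mul_le_mul_left h2 (by omega)

/-- auxiliary: real central binomial lower bound `4^n ≤ 2 √n C(2n,n)`. -/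
lemma aux_cb_real (n : ℕ) (hn : 1 ≤ n) :
    (4:ℝ)^n ≤ 2 * Real.sqrt n * Nat.centralBinom n := by
  have h0 : (0:ℝ) ≤ 2 * Real.sqrt n * Nat.centralBinom n := by positivity
  have h1 : ((4:ℝ)^n)^2 ≤ (2 * Real.sqrt n * Nat.centralBinom n)^2 := by
    have e1 : (2 * Real.sqrt n * (Nat.centralBinom n : ℝ))^2
        = 4 * (Real.sqrt n)^2 * (Nat.centralBinom n : ℝ)^2 := by ring
    rw [e1, Real.sq_sqrt (by positivity : (0:ℝ) ≤ (n:ℝ))]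
    have hcast : (16:ℝ)^n ≤ 4 * n * (Nat.centralBinom n : ℝ)^2 := by
      exact_mod_cast aux_cb_sq n hn
    calc ((4:ℝ)^n)^2 = 16^n := by rw [← pow_mul, pow_mul']; norm_num
      _ ≤ 4 * n * (Nat.centralBinom n : ℝ)^2 := hcast
      _ = 4 * (n:ℝ) * (Nat.centralBinom n : ℝ)^2 := by ring
  calc (4:ℝ)^n = Real.sqrt (((4:ℝ)^n)^2) := by rw [Real.sqrt_sq (by positivity)]
    _ ≤ Real.sqrt ((2 * Real.sqrt n * Nat.centralBinom n)^2) := Real.sqrt_le_sqrt h1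
    _ = 2 * Real.sqrt n * Nat.centralBinom n := Real.sqrt_sq h0

/-- auxiliary: telescoping identity `∑_{j=0}^m (K-2j) C(K,j) = (m+1) C(K,m+1)`. -/
lemma aux_tel (K m : ℕ) (h : 2*m ≤ K) :
    ∑ j ∈ range (m+1), ((K:ℝ) - 2*j) * (K.choose j)
      = (m+1) * (K.choose (m+1)) := by
  induction m with
  | zero => simp
  | succ m ih =>
    have h' : 2*m ≤ K := by omega
    rw [Finset.sum_range_succ, ih h']
    have hle : m + 1 ≤ K := by omega
    have key : (K.choose (m+2) : ℝ) * (m+2) = (K.choose (m+1)) * ((K:ℝ) - (m+1)) := by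
      have h2 := Nat.choose_succ_right_eq K (m+1)
      have h3 : ((K.choose (m+1+1) * (m+1+1) : ℕ) : ℝ) = ((K.choose (m+1) * (K - (m+1)) : ℕ) : ℝ) :=
        congrArg _ h2
      push_cast [Nat.cast_sub hle] at h3
      linarith
    push_cast
    nlinarith [key]

/-- auxiliary: the final arithmetic computation. -/
lemma aux_final (K : ℕ) (hK2 : 2 ≤ K) :
    ((1:ℝ)/2)^K * ∑ j ∈ range (K+1), (K.choose j : ℝ) * min (j:ℝ) ((K:ℝ)/2)
      ≤ ((K:ℝ)/2) * (1 - 1/Real.sqrt (26*K)) := by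
  set n := K / 2 with hn
  have h2n : 2*n ≤ K := by omega
  have hK2n1 : K ≤ 2*n+1 := by omega
  have hn1 : 1 ≤ n := by omega
  -- rewrite min
  have hmin : ∀ j : ℕ, min ((j:ℝ)) ((K:ℝ)/2) = (K:ℝ)/2 - ((K - 2*j : ℕ):ℝ)/2 := by
    intro j
    rcases le_or_gt (2*j) K with h | h
    · rw [Nat.cast_sub h]
      have hj : (j:ℝ) ≤ (K:ℝ)/2 := by
        have : ((2*j : ℕ):ℝ) ≤ (K:ℝ) := by exact_mod_cast h
        push_cast at this; linarith
      rw [min_eq_left hj]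
      push_cast; ring
    · have h0 : K - 2*j = 0 := by omega
      have hj : (K:ℝ)/2 ≤ (j:ℝ) := by
        have : (K:ℝ) ≤ ((2*j : ℕ):ℝ) := by exact_mod_cast h.le
        push_cast at this; linarith
      rw [h0, min_eq_right hj]
      push_cast; ring
  have hsplit : ∑ j ∈ range (K+1), (K.choose j : ℝ) * min (j:ℝ) ((K:ℝ)/2)
      = (K:ℝ)/2 * (2:ℝ)^K - 1/2 * (((n:ℝ)+1) * (K.choose (n+1))) := by
    have e1 : ∑ j ∈ range (K+1), (K.choose j : ℝ) * min (j:ℝ) ((K:ℝ)/2)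
        = ∑ j ∈ range (K+1),
            ((K:ℝ)/2 * (K.choose j) - ((K.choose j : ℝ) * ((K - 2*j : ℕ):ℝ)) / 2) := by
      refine Finset.sum_congr rfl fun j _ => ?_
      rw [hmin j]; ring
    rw [e1, Finset.sum_sub_distrib, ← Finset.mul_sum, ← Finset.sum_div]
    have e2 : ∑ j ∈ range (K+1), (K.choose j : ℝ) = 2^K := by
      exact_mod_cast congrArg (Nat.cast : ℕ → ℝ) (Nat.sum_range_choose K)
    have e4 : ∑ j ∈ range (K+1), (K.choose j : ℝ) * ((K - 2*j:ℕ):ℝ)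
        = ∑ j ∈ range (n+1), (K.choose j : ℝ) * ((K - 2*j:ℕ):ℝ) := by
      symm
      apply Finset.sum_subset
      · exact Finset.range_subset_range.2 (by omega)
      · intro j hj hnj
        simp only [Finset.mem_range] at hj hnj
        have : K - 2*j = 0 := by omega
        simp [this]
    have e5 : ∑ j ∈ range (n+1), (K.choose j : ℝ) * ((K - 2*j:ℕ):ℝ)
        = ((n:ℝ)+1) * (K.choose (n+1)) := by
      rw [← aux_tel K n h2n]
      refine Finset.sum_congr rfl fun j hj => ?_
      simp only [Finset.mem_range] at hj
      have hle : 2*j ≤ K := by omega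
      rw [Nat.cast_sub hle]
      push_cast; ring
    rw [e2, e4, e5]; ring
  rw [hsplit]
  -- abbreviations
  set X : ℝ := ((n:ℝ)+1) * (K.choose (n+1)) / 2^(K+1) with hX
  have hhalf : ((1:ℝ)/2)^K = 1/2^K := by rw [div_pow, one_pow]
  have h2Kpos : (0:ℝ) < 2^K := by positivity
  have hLHS : ((1:ℝ)/2)^K * ((K:ℝ)/2 * (2:ℝ)^K - 1/2 * (((n:ℝ)+1) * (K.choose (n+1))))
      = (K:ℝ)/2 - X := by
    rw [hhalf, hX, pow_succ]
    field_simp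
  rw [hLHS]
  -- lower bound X
  have hcbpos : (0:ℝ) < Nat.centralBinom n := by
    exact_mod_cast Nat.centralBinom_pos n
  have hp1 : (2:ℝ)^(2*n+1) = 2 * 4^n := by
    rw [pow_succ, pow_mul]; norm_num; ring
  have hcb : (n:ℝ) * Nat.centralBinom n / (2 * 4^n) ≤ X := by
    rcases (by omega : K = 2*n ∨ K = 2*n+1) with hKe | hKo
    · -- even case : equality
      have hNe : K.choose (n+1) * (n+1) = Nat.centralBinom n * n := by
        have := Nat.choose_succ_right_eq K n
        rw [hKe] at this ⊢
        have h1 : 2*n - n = n := by omega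
        rw [h1] at this
        exact this
      have hNe' : ((K.choose (n+1) : ℝ)) * ((n:ℝ)+1) = (Nat.centralBinom n : ℝ) * n := by
        exact_mod_cast congrArg (Nat.cast : ℕ → ℝ) hNe
      have hpow : (2:ℝ)^(K+1) = 2 * 4^n := by rw [hKe]; exact hp1
      apply le_of_eq
      rw [hX, hpow]
      rw [div_eq_div_iff (by positivity) (by positivity)]
      linear_combination (-(2*(4:ℝ)^n)) * hNe'
    · -- odd case
      have hNe : (2*n+1) * Nat.centralBinom n = K.choose (n+1) * (n+1) := by
        have := Nat.add_one_mul_choose_eq (2*n) n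
        rw [hKo]
        simpa [Nat.centralBinom] using this
      have hNe' : ((2*(n:ℝ)+1)) * (Nat.centralBinom n : ℝ) = (K.choose (n+1) : ℝ) * ((n:ℝ)+1) := by
        exact_mod_cast congrArg (Nat.cast : ℕ → ℝ) hNe
      have hpow : (2:ℝ)^(K+1) = 2 * 4^n * 2 := by rw [hKo, pow_succ, hp1]
      rw [hX, hpow, div_le_div_iff₀ (by positivity) (by positivity)]
      have h4 : (0:ℝ) < (4:ℝ)^n := by positivity
      have e : ((n:ℝ)+1) * (K.choose (n+1)) = (2*(n:ℝ)+1) * Nat.centralBinom n := by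
        linarith [hNe']
      rw [e]
      nlinarith [mul_pos hcbpos h4]
  have hsqn : (0:ℝ) < Real.sqrt n := Real.sqrt_pos.2 (by exact_mod_cast hn1)
  have hcb2 : Real.sqrt n / 4 ≤ (n:ℝ) * Nat.centralBinom n / (2 * 4^n) := by
    rw [div_le_div_iff₀ (by norm_num) (by positivity)]
    have hmul := mul_le_mul_of_nonneg_left (aux_cb_real n hn1)
      (le_of_lt (by positivity : (0:ℝ) < 2 * Real.sqrt n))
    nlinarith [Real.sq_sqrt (by positivity : (0:ℝ) ≤ (n:ℝ)), hsqn]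
  have hKr : (0:ℝ) < (K:ℝ) := by exact_mod_cast (by omega : 0 < K)
  have hs26 : (0:ℝ) < Real.sqrt (26*K) := Real.sqrt_pos.2 (by positivity)
  have hfinal : (K:ℝ)/2 / Real.sqrt (26*K) ≤ Real.sqrt n / 4 := by
    rw [div_le_div_iff₀ hs26 (by norm_num)]
    have e6 : Real.sqrt n * Real.sqrt (26*(K:ℝ)) = Real.sqrt ((n:ℝ) * (26*K)) :=
      (Real.sqrt_mul (by positivity) _).symm
    rw [e6]
    have e7 : (K:ℝ)/2*4 = Real.sqrt (((K:ℝ)/2*4)^2) := (Real.sqrt_sq (by positivity)).symm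
    rw [e7]
    apply Real.sqrt_le_sqrt
    have hKle : (K:ℝ) ≤ 2*(n:ℝ)+1 := by exact_mod_cast hK2n1
    have hnr : (1:ℝ) ≤ (n:ℝ) := by exact_mod_cast hn1
    have hKge : (2:ℝ) ≤ (K:ℝ) := by exact_mod_cast hK2
    nlinarith
  have hrhs : ((K:ℝ)/2) * (1 - 1/Real.sqrt (26*K)) = (K:ℝ)/2 - (K:ℝ)/2 / Real.sqrt (26*K) := by
    ring
  rw [hrhs]
  linarith

/-- Binomial instance showing the asymptotic tightness is best possible: for `K ≥ 72π` and
i.i.d. Bernoulli(1/2) random variables `B₁,…,B_K`,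
`E[min (Σ_{k=1}^K B_k, K/2)] ≤ (K/2) (1 − 1/√(26 K))`. -/
theorem binomial_min_capacity_bound
    {Ω : Type*} [MeasurableSpace Ω] (Pr : Measure Ω) [IsProbabilityMeasure Pr]
    (K : ℕ) (hK : 72 * Real.pi ≤ (K : ℝ))
    (B : ℕ → Ω → ℕ) (hBmeas : ∀ k, Measurable (B k))
    (hB01 : ∀ k ∈ Finset.Icc 1 K, ∀ ω, B k ω ≤ 1)
    (hBone : ∀ k ∈ Finset.Icc 1 K, Pr {ω | B k ω = 1} = 1 / 2)
    (hBzero : ∀ k ∈ Finset.Icc 1 K, Pr {ω | B k ω = 0} = 1 / 2)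
    (hBindep : ∀ v : ℕ → ℕ,
      Pr {ω | ∀ k ∈ Finset.Icc 1 K, B k ω = v k} =
        ∏ k ∈ Finset.Icc 1 K, Pr {ω | B k ω = v k}) :
    ∫ ω, min (∑ k ∈ Finset.Icc 1 K, (B k ω : ℝ)) ((K : ℝ) / 2) ∂Pr ≤
      ((K : ℝ) / 2) * (1 - 1 / Real.sqrt (26 * K)) := by
  classical
  have hK2 : 2 ≤ K := by
    have h216 : (216:ℝ) ≤ (K:ℝ) := le_trans (by nlinarith [Real.pi_gt_three]) hK
    exact_mod_cast le_trans (by norm_num : (2:ℝ) ≤ 216) h216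
  set I : Finset ℕ := Finset.Icc 1 K with hI
  have hIcard : I.card = K := by rw [hI, Nat.card_Icc]; omega
  set v : Finset ℕ → ℕ → ℕ := fun T k => if k ∈ T then 1 else 0 with hv
  set E : Finset ℕ → Set Ω := fun T => {ω | ∀ k ∈ I, B k ω = v T k} with hE
  have hEmeas : ∀ T, MeasurableSet (E T) := by
    intro T
    have e : E T = ⋂ k ∈ (I : Set ℕ), (B k) ⁻¹' {v T k} := by
      ext ω; simp [hE]
    rw [e]
    exact MeasurableSet.biInter (Set.to_countable _)
      (fun k _ => (hBmeas k) (measurableSet_singleton (v T k)))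
  have hPE : ∀ T ∈ I.powerset, Pr (E T) = (1/2 : ENNReal)^K := by
    intro T hT
    have h1 : Pr (E T) = ∏ k ∈ I, Pr {ω | B k ω = v T k} := hBindep (v T)
    rw [h1]
    have h2 : ∀ k ∈ I, Pr {ω | B k ω = v T k} = 1/2 := by
      intro k hk
      by_cases hkT : k ∈ T
      · simpa [hv, hkT] using hBone k hk
      · simpa [hv, hkT] using hBzero k hk
    rw [Finset.prod_congr rfl h2, Finset.prod_const, hIcard]
  -- pointwise decomposition
  have key : ∀ ω, min (∑ k ∈ I, (B k ω : ℝ)) ((K:ℝ)/2)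
      = ∑ T ∈ I.powerset,
          Set.indicator (E T) (fun _ => min ((T.card : ℝ)) ((K:ℝ)/2)) ω := by
    intro ω
    set Tw : Finset ℕ := I.filter (fun k => B k ω = 1) with hTw
    have hTmem : Tw ∈ I.powerset := Finset.mem_powerset.2 (Finset.filter_subset _ _)
    have hBval : ∀ k ∈ I, B k ω = v Tw k := by
      intro k hk
      have h01 := hB01 k hk ω
      by_cases h1 : B k ω = 1
      · simp [hv, hTw, Finset.mem_filter, hk, h1]
      · have h0 : B k ω = 0 := by omega
        simp [hv, hTw, Finset.mem_filter, h0, h1]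
    have hωE : ω ∈ E Tw := hBval
    have hsum : ∑ k ∈ I, (B k ω : ℝ) = Tw.card := by
      have e : ∀ k ∈ I, (B k ω : ℝ) = if k ∈ Tw then (1:ℝ) else 0 := by
        intro k hk
        rw [hBval k hk]
        by_cases hkT : k ∈ Tw <;> simp [hv, hkT]
      rw [Finset.sum_congr rfl e, Finset.sum_ite_mem,
        Finset.inter_eq_right.2 (Finset.filter_subset _ _)]
      simp [hTw]
    have h0 : ∀ T ∈ I.powerset, T ≠ Tw →
        Set.indicator (E T) (fun _ => min ((T.card : ℝ)) ((K:ℝ)/2)) ω = 0 := by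
      intro T hT hne
      apply Set.indicator_of_notMem
      intro hωT
      apply hne
      have hTsub := Finset.mem_powerset.1 hT
      ext k
      simp only [hTw, Finset.mem_filter]
      constructor
      · intro hkT
        have hkI := hTsub hkT
        refine ⟨hkI, ?_⟩
        simpa [hv, hkT] using hωT k hkI
      · rintro ⟨hkI, hk1⟩
        have hBk := hωT k hkI
        rw [hk1] at hBk
        by_contra hkT
        simp [hv, hkT] at hBk
    rw [Finset.sum_eq_single_of_mem Tw hTmem h0, Set.indicator_of_mem hωE, hsum]
  -- compute the integral
  have hfun : (fun ω => min (∑ k ∈ I, (B k ω : ℝ)) ((K:ℝ)/2))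
      = fun ω => ∑ T ∈ I.powerset,
          Set.indicator (E T) (fun _ => min ((T.card : ℝ)) ((K:ℝ)/2)) ω := funext key
  calc ∫ ω, min (∑ k ∈ I, (B k ω : ℝ)) ((K:ℝ)/2) ∂Pr
      = ∫ ω, ∑ T ∈ I.powerset,
          Set.indicator (E T) (fun _ => min ((T.card : ℝ)) ((K:ℝ)/2)) ω ∂Pr := by
        rw [hfun]
    _ = ∑ T ∈ I.powerset,
          ∫ ω, Set.indicator (E T) (fun _ => min ((T.card : ℝ)) ((K:ℝ)/2)) ω ∂Pr :=
        integral_finset_sum _ (fun T _ => (integrable_const _).indicator (hEmeas T))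
    _ = ∑ T ∈ I.powerset, ((1:ℝ)/2)^K * min ((T.card : ℝ)) ((K:ℝ)/2) := by
        refine Finset.sum_congr rfl fun T hT => ?_
        rw [integral_indicator_const _ (hEmeas T), Measure.real_def, hPE T hT]
        rw [smul_eq_mul]
        congr 1
        simp [ENNReal.toReal_pow]
    _ = ((1:ℝ)/2)^K * ∑ T ∈ I.powerset, min ((T.card : ℝ)) ((K:ℝ)/2) := by
        rw [Finset.mul_sum]
    _ = ((1:ℝ)/2)^K * ∑ j ∈ range (K+1), (K.choose j : ℝ) * min ((j:ℝ)) ((K:ℝ)/2) := by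
        congr 1
        rw [Finset.sum_powerset_apply_card (fun m => min ((m:ℝ)) ((K:ℝ)/2)), hIcard]
        refine Finset.sum_congr rfl fun j _ => ?_
        rw [nsmul_eq_mul]
    _ ≤ ((K:ℝ)/2) * (1 - 1/Real.sqrt (26*K)) := aux_final K hK2
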